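/- Let λ ∈ ℝ^N with λ_n ≥ 0 for all n, let c ∈ ℝ^N with c_n ≥ 0 for all n, let ε > 0, and let k > 0 satisfy ∑_{n=1}^N (c_n k / (2λ_n + k))² = ε². Suppose ∑_{n=1}^N 2λ_n c_n² / (2λ_n + k)² > 0 and set μ = (∑_{n=1}^N 2λ_n c_n² / (2λ_n + k)²)⁻¹ and u_n = μ c_n / (2λ_n + k) for each n. Then μ > 0, u_n ≥ 0 for all n, ‖u‖₂ = με/k, and the constraint of the reduced RAB problem holds with equality: ∑_{n=1}^N c_n u_n = ε‖u‖₂ + 1. -/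

import Mathlib

/-- with `λ ≥ 0`, `c ≥ 0`, `ε > 0`, `k > 0` satisfying the secular
equation, if `∑ 2λ_n c_n²/(2λ_n+k)² > 0` and `μ` is its inverse and
`u_n = μ c_n/(2λ_n + k)`, then `μ > 0`, `u ≥ 0`, `‖u‖₂ = με/k`, and the reduced
RAB constraint holds with equality. -/
theorem rab_kkt_point_feasible (N : ℕ)
    (lam c : Fin N → ℝ) (hlam : ∀ n, 0 ≤ lam n) (hc : ∀ n, 0 ≤ c n)
    (ε k : ℝ) (hε : 0 < ε) (hk : 0 < k)
    (hsec : ∑ n, (c n * k / (2 * lam n + k)) ^ 2 = ε ^ 2)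
    (hpos : 0 < ∑ n, 2 * lam n * (c n) ^ 2 / (2 * lam n + k) ^ 2)
    (μ : ℝ) (hμ : μ = (∑ n, 2 * lam n * (c n) ^ 2 / (2 * lam n + k) ^ 2)⁻¹)
    (u : Fin N → ℝ) (hu : ∀ n, u n = μ * c n / (2 * lam n + k)) :
    0 < μ ∧ (∀ n, 0 ≤ u n) ∧
    Real.sqrt (∑ n, (u n) ^ 2) = μ * ε / k ∧
    ∑ n, c n * u n = ε * Real.sqrt (∑ n, (u n) ^ 2) + 1 := by
  have hd : ∀ n, 0 < 2 * lam n + k := fun n => by nlinarith [hlam n]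
  have hμpos : 0 < μ := by rw [hμ]; exact inv_pos.mpr hpos
  have hS : ∑ n, (c n) ^ 2 / (2 * lam n + k) ^ 2 = ε ^ 2 / k ^ 2 := by
    have h : ∑ n, (c n * k / (2 * lam n + k)) ^ 2
        = k ^ 2 * ∑ n, (c n) ^ 2 / (2 * lam n + k) ^ 2 := by
      rw [Finset.mul_sum]
      refine Finset.sum_congr rfl fun n _ => ?_
      have := hd n
      field_simp
    rw [h] at hsec
    field_simp
    linarith [hsec]
  have hsum : ∑ n, (u n) ^ 2 = (μ * ε / k) ^ 2 := by
    have h : ∑ n, (u n) ^ 2 = μ ^ 2 * ∑ n, (c n) ^ 2 / (2 * lam n + k) ^ 2 := by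
      rw [Finset.mul_sum]
      refine Finset.sum_congr rfl fun n _ => ?_
      rw [hu n]
      have := hd n
      field_simp
    rw [h, hS]
    field_simp
  have hnorm : Real.sqrt (∑ n, (u n) ^ 2) = μ * ε / k := by
    rw [hsum, Real.sqrt_sq (by positivity)]
  refine ⟨hμpos, fun n => by
    rw [hu n]; exact div_nonneg (mul_nonneg hμpos.le (hc n)) (hd n).le, hnorm, ?_⟩
  rw [hnorm]
  have split : ∑ n, c n * u n
      = μ * (∑ n, (c n) ^ 2 * k / (2 * lam n + k) ^ 2)
        + μ * ∑ n, 2 * lam n * (c n) ^ 2 / (2 * lam n + k) ^ 2 := by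
    rw [Finset.mul_sum, Finset.mul_sum, ← Finset.sum_add_distrib]
    refine Finset.sum_congr rfl fun n _ => ?_
    rw [hu n]
    have := hd n
    field_simp; ring
  have h1 : ∑ n, (c n) ^ 2 * k / (2 * lam n + k) ^ 2 = ε ^ 2 / k := by
    have h : ∑ n, (c n) ^ 2 * k / (2 * lam n + k) ^ 2
        = k * ∑ n, (c n) ^ 2 / (2 * lam n + k) ^ 2 := by
      rw [Finset.mul_sum]
      refine Finset.sum_congr rfl fun n _ => ?_
      ring
    rw [h, hS]
    field_simp
  have h2 : μ * ∑ n, 2 * lam n * (c n) ^ 2 / (2 * lam n + k) ^ 2 = 1 := by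
    rw [hμ]; exact inv_mul_cancel₀ (ne_of_gt hpos)
  rw [split, h1, h2]
  field_simp
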